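/- If a ∈ A with φ(a) = 1, then the S-transform S_a(z) = ((1+z)/z)·𝒳_a(z) equals (1/z)·c_a^{⟨−1⟩}(z), where c_a(z) = Σ_{n≥1} κ_n(a) z^n is the free cumulant series and c_a^{⟨−1⟩} its compositional inverse. -/

import Mathlib

open scoped Classical
noncomputable section

/-- Formal composition `f ∘ g` of power series (intended for `g` with zero constant
coefficient, in which case this is the usual substitution of `g` into `f`). -/
def pscomp (f g : PowerSeries ℂ) : PowerSeries ℂ :=
  PowerSeries.mk fun n => ∑ k ∈ Finset.range (n + 1),
    (PowerSeries.coeff k f) * PowerSeries.coeff n (g ^ k)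

/-- The series `Σ_{n ≥ 1} f n · zⁿ` associated to a sequence `f`. -/
def phiSeries (f : ℕ → ℂ) : PowerSeries ℂ :=
  PowerSeries.mk fun n => if n = 0 then 0 else f n

/-- A setoid (partition) is non-crossing with respect to a position key `k`:
there is no crossing `k a < k b < k c < k d` with `a ∼ c`, `b ∼ d`, `a ≁ b`. -/
def NonCrossingOn {α : Type*} (k : α → ℤ) (s : Setoid α) : Prop :=
  ∀ a b c d : α, k a < k b → k b < k c → k c < k d → s.r a c → s.r b d → s.r a b

/-- Non-crossing partitions of `{1, …, n}` in the usual order. -/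
def IsNC {n : ℕ} (s : Setoid (Fin n)) : Prop :=
  NonCrossingOn (fun i => (i.val : ℤ)) s

def half {n : ℕ} (x : Fin (2 * n)) : Fin n := ⟨x.val / 2, by omega⟩

/-- The interleaved partition on `{1, 1', 2, 2', …, n, n'}`: even positions are the
unprimed points, carrying `p`; odd positions are the primed points, carrying `t`. -/
def interleave {n : ℕ} (p t : Setoid (Fin n)) : Setoid (Fin (2 * n)) where
  r x y := x.val % 2 = y.val % 2 ∧ (x.val % 2 = 0 → p.r (half x) (half y)) ∧
    (x.val % 2 = 1 → t.r (half x) (half y))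
  iseqv := by
    refine ⟨fun x => ⟨rfl, fun _ => p.iseqv.refl _, fun _ => t.iseqv.refl _⟩, ?_, ?_⟩
    · rintro x y ⟨h1, h2, h3⟩
      exact ⟨h1.symm, fun h0 => p.iseqv.symm (h2 (h1.trans h0)),
        fun h0 => t.iseqv.symm (h3 (h1.trans h0))⟩
    · rintro x y z ⟨h1, h2, h3⟩ ⟨h1', h2', h3'⟩
      exact ⟨h1.trans h1', fun h0 => p.iseqv.trans (h2 h0) (h2' (h1.symm.trans h0)),
        fun h0 => t.iseqv.trans (h3 h0) (h3' (h1.symm.trans h0))⟩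

/-- The Kreweras complement of `p ∈ NC(n)`: the largest partition `t` of the primed
points such that the interleaving of `p` and `t` is non-crossing on `{1,1',…,n,n'}`. -/
def kreweras {n : ℕ} (p : Setoid (Fin n)) : Setoid (Fin n) :=
  sSup {t | IsNC (interleave p t)}

/-- The blocks of a partition, as a finset of finsets. -/
def blocksOf {n : ℕ} (s : Setoid (Fin n)) : Finset (Finset (Fin n)) :=
  Finset.univ.image fun i => Finset.univ.filter fun j => s.r i j

/-- The value `f(0_n, π) = ∏_{V block of π} f(0_{|V|}, 1_{|V|})` of the multiplicative
function determined by the sequence `f n = f(0_n, 1_n)`. -/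
def fval {n : ℕ} (f : ℕ → ℂ) (s : Setoid (Fin n)) : ℂ :=
  ∏ B ∈ blocksOf s, f B.card

instance setoidFintype (n : ℕ) : Fintype (Setoid (Fin n)) :=
  Fintype.ofInjective (fun s => fun a b : Fin n => decide (s.r a b)) (by
    intro s t h
    apply Setoid.ext
    intro a b
    have := congrFun (congrFun h a) b
    simpa [decide_eq_decide] using this)

/-- Restriction of a partition to a block `B`, relabelled along the order
isomorphism `Fin B.card ≃o B`. -/
def restrictS {n : ℕ} (s : Setoid (Fin n)) (B : Finset (Fin n)) : Setoid (Fin B.card) :=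
  Setoid.comap (fun j => (B.orderIsoOfFin rfl j).val) s

/-- The value on the interval `[ρ, σ]` of the (canonical multiplicative extension of
the) multiplicative function determined by the sequence `f`, via the canonical
decomposition `[ρ, σ] ≅ ∏_{B block of σ} [ρ|_B, 1_B]` and
`f(τ, 1_m) = ∏_{C block of K(τ)} f(0_{|C|}, 1_{|C|})`. -/
def intervalVal {n : ℕ} (f : ℕ → ℂ) (ρ σ : Setoid (Fin n)) : ℂ :=
  ∏ B ∈ blocksOf σ, fval f (kreweras (restrictS ρ B))

namespace PSC

open PowerSeries Finset

lemma coeff_pscomp (f g : PowerSeries ℂ) (n : ℕ) :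
    coeff n (pscomp f g) = ∑ k ∈ range (n + 1), coeff k f * coeff n (g ^ k) := by
  simp [pscomp]

lemma coeff_pow_zero {g : PowerSeries ℂ} (hg : constantCoeff g = 0) {n k : ℕ} (h : n < k) :
    coeff n (g ^ k) = 0 := by
  have : (X : PowerSeries ℂ) ^ k ∣ g ^ k := pow_dvd_pow_of_dvd (X_dvd_iff.mpr hg) k
  exact (X_pow_dvd_iff.mp this) n h

lemma constantCoeff_pscomp (f g : PowerSeries ℂ) :
    constantCoeff (pscomp f g) = constantCoeff f := by
  have := coeff_pscomp f g 0
  simp only [range_one, sum_singleton, pow_zero, coeff_zero_eq_constantCoeff] at this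
  simpa using this

lemma pscomp_X_left {g : PowerSeries ℂ} (hg : constantCoeff g = 0) : pscomp X g = g := by
  ext n
  rw [coeff_pscomp]
  rcases Nat.eq_zero_or_pos n with rfl | hn
  · simpa using hg.symm
  · rw [Finset.sum_eq_single 1]
    · simp
    · intro k _ hk
      rw [coeff_X, if_neg hk, zero_mul]
    · intro h
      exact absurd (Finset.mem_range.mpr (by omega)) h

lemma pscomp_X_right (f : PowerSeries ℂ) : pscomp f X = f := by
  ext n
  rw [coeff_pscomp, Finset.sum_eq_single n]
  · simp
  · intro k _ hk
    rw [coeff_X_pow, if_neg (by omega), mul_zero]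
  · intro h
    exact absurd (Finset.mem_range.mpr (by omega)) h

lemma pscomp_one_left (g : PowerSeries ℂ) : pscomp 1 g = 1 := by
  ext n
  rw [coeff_pscomp, Finset.sum_eq_single 0]
  · simp
  · intro k _ hk
    rw [coeff_one, if_neg hk, zero_mul]
  · intro h
    exact absurd (Finset.mem_range.mpr (by omega)) h

lemma pscomp_add_left (f₁ f₂ g : PowerSeries ℂ) :
    pscomp (f₁ + f₂) g = pscomp f₁ g + pscomp f₂ g := by
  ext n
  simp [coeff_pscomp, add_mul, Finset.sum_add_distrib]

lemma coeff_pscomp_eval₂ (f g : PowerSeries ℂ) (n : ℕ) :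
    coeff n (pscomp f g) =
      coeff n (Polynomial.eval₂ (C (R := ℂ)) g (trunc (n + 1) f)) := by
  rw [Polynomial.eval₂_eq_sum_range' (C (R := ℂ)) (natDegree_trunc_lt f n) g, coeff_pscomp, map_sum]
  refine Finset.sum_congr rfl fun k hk => ?_
  rw [coeff_trunc, if_pos (Finset.mem_range.mp hk), coeff_C_mul]

lemma coeff_eval₂_congr {g : PowerSeries ℂ} (hg : constantCoeff g = 0) {n : ℕ}
    {P Q : Polynomial ℂ} (h : ∀ k ≤ n, P.coeff k = Q.coeff k) :
    coeff n (Polynomial.eval₂ (C (R := ℂ)) g P) = coeff n (Polynomial.eval₂ (C (R := ℂ)) g Q) := by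
  set M := max P.natDegree Q.natDegree + 1 with hM
  rw [Polynomial.eval₂_eq_sum_range' (C (R := ℂ)) (by omega : P.natDegree < M) g,
    Polynomial.eval₂_eq_sum_range' (C (R := ℂ)) (by omega : Q.natDegree < M) g, map_sum, map_sum]
  refine Finset.sum_congr rfl fun k _ => ?_
  rcases le_or_gt k n with hk | hk
  · rw [h k hk]
  · rw [coeff_C_mul, coeff_C_mul, coeff_pow_zero hg hk, mul_zero, mul_zero]

lemma coeff_eval₂_trunc_le {g : PowerSeries ℂ} (hg : constantCoeff g = 0)
    (f : PowerSeries ℂ) {i m : ℕ} (him : i < m) :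
    coeff i (Polynomial.eval₂ (C (R := ℂ)) g (trunc m f)) = coeff i (pscomp f g) := by
  rw [coeff_pscomp_eval₂]
  exact (coeff_eval₂_congr hg fun k hk => by
    rw [coeff_trunc, coeff_trunc, if_pos (by omega), if_pos (by omega)]).symm

lemma pscomp_mul_left {g : PowerSeries ℂ} (hg : constantCoeff g = 0) (f₁ f₂ : PowerSeries ℂ) :
    pscomp (f₁ * f₂) g = pscomp f₁ g * pscomp f₂ g := by
  ext n
  rw [coeff_pscomp_eval₂]
  have h1 : coeff n (Polynomial.eval₂ (C (R := ℂ)) g (trunc (n+1) (f₁ * f₂)))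
      = coeff n (Polynomial.eval₂ (C (R := ℂ)) g (trunc (n+1) f₁ * trunc (n+1) f₂)) := by
    refine coeff_eval₂_congr hg fun k hk => ?_
    rw [coeff_trunc, if_pos (by omega), Polynomial.coeff_mul, PowerSeries.coeff_mul]
    refine Finset.sum_congr rfl fun p hp => ?_
    have hp' := Finset.HasAntidiagonal.mem_antidiagonal.mp hp
    rw [coeff_trunc, if_pos (by omega), coeff_trunc, if_pos (by omega)]
  rw [h1, Polynomial.eval₂_mul, PowerSeries.coeff_mul, PowerSeries.coeff_mul]
  refine Finset.sum_congr rfl fun p hp => ?_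
  have hp' := Finset.HasAntidiagonal.mem_antidiagonal.mp hp
  rw [coeff_eval₂_trunc_le hg f₁ (by omega), coeff_eval₂_trunc_le hg f₂ (by omega)]

lemma pscomp_pow_left {g : PowerSeries ℂ} (hg : constantCoeff g = 0) (f : PowerSeries ℂ)
    (l : ℕ) : pscomp (f ^ l) g = (pscomp f g) ^ l := by
  induction l with
  | zero => simpa using pscomp_one_left g
  | succ l ih => rw [pow_succ, pow_succ, pscomp_mul_left hg, ih]

lemma pscomp_assoc {g h : PowerSeries ℂ} (hgc : constantCoeff g = 0)
    (hhc : constantCoeff h = 0) (f : PowerSeries ℂ) :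
    pscomp (pscomp f g) h = pscomp f (pscomp g h) := by
  ext n
  rw [coeff_pscomp, coeff_pscomp]
  have key : ∀ l, coeff n ((pscomp g h) ^ l) = coeff n (pscomp (g ^ l) h) := by
    intro l; rw [pscomp_pow_left hhc]
  calc ∑ k ∈ range (n+1), coeff k (pscomp f g) * coeff n (h ^ k)
      = ∑ k ∈ range (n+1), (∑ l ∈ range (n+1), coeff l f * coeff k (g ^ l))
          * coeff n (h ^ k) := by
        refine Finset.sum_congr rfl fun k hk => ?_
        rw [coeff_pscomp]
        congr 1
        refine Finset.sum_subset (Finset.range_subset_range.mpr (by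
          have := Finset.mem_range.mp hk; omega)) fun l hl2 hl => ?_
        simp only [Finset.mem_range] at hl
        rw [coeff_pow_zero hgc (by omega), mul_zero]
    _ = ∑ k ∈ range (n+1), ∑ l ∈ range (n+1), coeff l f * coeff k (g ^ l)
          * coeff n (h ^ k) := by simp only [Finset.sum_mul]
    _ = ∑ l ∈ range (n+1), ∑ k ∈ range (n+1), coeff l f * coeff k (g ^ l)
          * coeff n (h ^ k) := Finset.sum_comm
    _ = ∑ l ∈ range (n+1), coeff l f * ∑ k ∈ range (n+1), coeff k (g ^ l)
          * coeff n (h ^ k) := by simp only [Finset.mul_sum, mul_assoc]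
    _ = ∑ l ∈ range (n+1), coeff l f * coeff n ((pscomp g h) ^ l) := by
        refine Finset.sum_congr rfl fun l _ => ?_
        rw [key l, coeff_pscomp]

end PSC
namespace NCP

open Finset

variable {N : ℕ}

@[simp] lemma val_mk {n a : ℕ} (h : a < n) : (⟨a, h⟩ : Fin n).val = a := rfl

def blk (s : Setoid (Fin N)) (i : Fin N) : Finset (Fin N) := univ.filter fun j => s.r i j

lemma mem_blk {s : Setoid (Fin N)} {i j : Fin N} : j ∈ blk s i ↔ s.r i j := by
  simp [blk]

lemma blk_eq_blk {s : Setoid (Fin N)} {i j : Fin N} (h : s.r i j) : blk s i = blk s j := by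
  ext x
  simp only [mem_blk]
  exact ⟨fun hx => s.iseqv.trans (s.iseqv.symm h) hx, fun hx => s.iseqv.trans h hx⟩

lemma mem_blocksOf {s : Setoid (Fin N)} {B : Finset (Fin N)} :
    B ∈ blocksOf s ↔ ∃ i, blk s i = B := by
  simp [blocksOf, blk, Finset.mem_image]

def block0 (s : Setoid (Fin N)) : Finset (Fin N) :=
  univ.filter fun j => ∃ i : Fin N, i.val = 0 ∧ s.r i j

lemma mem_block0 {s : Setoid (Fin N)} {i : Fin N} (hi : i.val = 0) {j : Fin N} :
    j ∈ block0 s ↔ s.r i j := by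
  simp only [block0, Finset.mem_filter, Finset.mem_univ, true_and]
  constructor
  · rintro ⟨i', hi', h⟩
    have : i' = i := Fin.ext (by omega)
    exact this ▸ h
  · exact fun h => ⟨i, hi, h⟩

lemma block0_eq {s : Setoid (Fin N)} {i : Fin N} (hi : i.val = 0) :
    block0 s = blk s i := by
  ext x; rw [mem_block0 hi, mem_blk]

/-- the weight with the block of `0` weighted by `κ (t + card)` instead of `κ card`. -/
def wtf (κ : ℕ → ℂ) (t : ℕ) (s : Setoid (Fin N)) : ℂ :=
  κ (t + (block0 s).card) * ∏ B ∈ (blocksOf s).erase (block0 s), κ B.card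

def Ssum (κ : ℕ → ℂ) (n : ℕ) : ℂ := ∑ π : {s : Setoid (Fin n) // IsNC s}, fval κ π.1

def Gsum (κ : ℕ → ℂ) (t n : ℕ) : ℂ := ∑ π : {s : Setoid (Fin n) // IsNC s}, wtf κ t π.1

lemma wtf_zero (κ : ℕ → ℂ) (hN : 0 < N) (s : Setoid (Fin N)) : wtf κ 0 s = fval κ s := by
  have hmem : block0 s ∈ blocksOf s :=
    mem_blocksOf.mpr ⟨⟨0, hN⟩, (block0_eq rfl).symm⟩
  rw [wtf, zero_add, fval]
  exact Finset.mul_prod_erase (blocksOf s) (fun B => κ B.card) hmem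

instance : Subsingleton (Setoid (Fin 0)) :=
  ⟨fun s t => Setoid.ext fun a => a.elim0⟩

lemma Gsum_zero (κ : ℕ → ℂ) (t : ℕ) : Gsum κ t 0 = κ t := by
  have h1 : IsNC (⊤ : Setoid (Fin 0)) := fun a => a.elim0
  rw [Gsum, Fintype.sum_subsingleton _ ⟨⊤, h1⟩]
  simp [wtf, block0, blocksOf]

lemma Ssum_zero (κ : ℕ → ℂ) : Ssum κ 0 = 1 := by
  have h1 : IsNC (⊤ : Setoid (Fin 0)) := fun a => a.elim0
  rw [Ssum, Fintype.sum_subsingleton _ ⟨⊤, h1⟩]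
  simp [fval, blocksOf]

lemma Gsum_eq_Ssum (κ : ℕ → ℂ) (n : ℕ) (hn : 0 < n) : Gsum κ 0 n = Ssum κ n := by
  rw [Gsum, Ssum]
  exact Finset.sum_congr rfl fun π _ => wtf_zero κ hn π.1

/-- selector: the number of points strictly between `0` and the second element
of the block of `0` (`N - 1` if that block is a singleton). -/
def sel (s : Setoid (Fin N)) : ℕ :=
  if h : ((block0 s).filter fun x => 0 < x.val).Nonempty
  then ((((block0 s).filter fun x => 0 < x.val)).min' h).val - 1
  else N - 1

lemma sel_lt (s : Setoid (Fin N)) (hN : 0 < N) : sel s < N := by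
  unfold sel
  split
  · next h =>
    have := (Finset.mem_filter.mp (Finset.min'_mem _ h)).1
    have := (((block0 s).filter fun x => 0 < x.val).min' h).isLt
    omega
  · omega

lemma sel_eq (s : Setoid (Fin N)) {i0 : Fin N} (h0 : i0.val = 0) {m : ℕ} (hm : m < N) :
    sel s = m ↔ ((∀ y : Fin N, 0 < y.val → y.val ≤ m → ¬ s.r i0 y) ∧
      ∀ y : Fin N, y.val = m + 1 → s.r i0 y) := by
  unfold sel
  set P := (block0 s).filter (fun x => 0 < x.val) with hP
  have hmemP : ∀ y : Fin N, y ∈ P ↔ (s.r i0 y ∧ 0 < y.val) := by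
    intro y
    rw [hP, Finset.mem_filter, mem_block0 h0]
  by_cases h : P.Nonempty
  · rw [dif_pos h]
    have hmin := P.min'_mem h
    have hpos : 0 < (P.min' h).val := ((hmemP _).1 hmin).2
    constructor
    · intro he
      have hminv : (P.min' h).val = m + 1 := by omega
      constructor
      · intro y hy1 hy2 hr
        have hle : P.min' h ≤ y := P.min'_le y ((hmemP y).2 ⟨hr, hy1⟩)
        have := Fin.le_def.mp hle
        omega
      · intro y hyv
        have hy : y = P.min' h := Fin.ext (by omega)
        rw [hy]; exact ((hmemP _).1 hmin).1
    · rintro ⟨h1, h2⟩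
      obtain ⟨hr0, _⟩ := (hmemP _).1 hmin
      have hge : m + 1 ≤ (P.min' h).val := by
        by_contra hlt
        exact h1 _ hpos (by omega) hr0
      rcases lt_or_eq_of_le (by omega : m + 1 ≤ N) with hlt | heq
      · have hy : (⟨m+1, hlt⟩ : Fin N) ∈ P := (hmemP _).2 ⟨h2 _ rfl, Nat.succ_pos m⟩
        have h3 : (P.min' h).val ≤ m + 1 := Fin.le_def.mp (P.min'_le _ hy)
        omega
      · have h4 := (P.min' h).isLt
        omega
  · rw [dif_neg h]
    constructor
    · intro he
      refine ⟨fun y hy1 _ hr => h ⟨y, (hmemP y).2 ⟨hr, hy1⟩⟩, fun y hyv => ?_⟩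
      exfalso
      have h5 : y.val < N := y.isLt
      omega
    · rintro ⟨h1, h2⟩
      by_contra hne
      have hlt : m + 1 < N := by omega
      exact h ⟨⟨m+1, hlt⟩, (hmemP _).2 ⟨h2 _ rfl, Nat.succ_pos m⟩⟩

end NCP
namespace NCP

open Finset

section Step

variable {m r : ℕ}

def gape (i : Fin m) : Fin (m + r + 1) := ⟨i.val + 1, by have := i.isLt; omega⟩

def reste (i : Fin r) : Fin (m + r + 1) := ⟨i.val + m + 1, by have := i.isLt; omega⟩

lemma gape_inj : Function.Injective (gape (m := m) (r := r)) := fun a b h =>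
  Fin.ext (by have := congrArg Fin.val h; simpa [gape] using this)

lemma reste_inj : Function.Injective (reste (m := m) (r := r)) := fun a b h =>
  Fin.ext (by have := congrArg Fin.val h; simpa [reste] using this)

def addMin {r : ℕ} (τ : Setoid (Fin r)) : Setoid (Fin (r + 1)) where
  r x y := ∀ i j : Fin r, i.val = x.val - 1 → j.val = y.val - 1 → τ.r i j
  iseqv := by
    constructor
    · intro x i j hi hj
      have hij : i = j := Fin.ext (by omega)
      exact hij ▸ τ.iseqv.refl i
    · intro x y h i j hi hj
      exact τ.iseqv.symm (h j i hj hi)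
    · intro x y z hxy hyz i j hi hj
      have hr : 0 < r := i.pos
      have hy := y.isLt
      exact τ.iseqv.trans (hxy i ⟨y.val - 1, by omega⟩ hi rfl)
        (hyz ⟨y.val - 1, by omega⟩ j rfl hj)

lemma addMin_rel {τ : Setoid (Fin r)} {p q : Fin (r + 1)} (i j : Fin r)
    (hi : i.val = p.val - 1) (hj : j.val = q.val - 1) :
    (addMin τ).r p q ↔ τ.r i j := by
  constructor
  · exact fun h => h i j hi hj
  · intro h i' j' hi' hj'
    have h1 : i' = i := Fin.ext (by omega)
    have h2 : j' = j := Fin.ext (by omega)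
    rw [h1, h2]; exact h

def ssum {α β : Type*} (σ : Setoid α) (τ : Setoid β) : Setoid (α ⊕ β) where
  r x y := match x, y with
    | Sum.inl a, Sum.inl b => σ.r a b
    | Sum.inr a, Sum.inr b => τ.r a b
    | _, _ => False
  iseqv := by
    constructor
    · rintro (a | a)
      exacts [σ.iseqv.refl a, τ.iseqv.refl a]
    · rintro (a | a) (b | b) h
      exacts [σ.iseqv.symm h, h.elim, h.elim, τ.iseqv.symm h]
    · rintro (a | a) (b | b) (c | c) h1 h2
      exacts [σ.iseqv.trans h1 h2, h2.elim, h1.elim, h1.elim, h1.elim, h1.elim,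
        h2.elim, τ.iseqv.trans h1 h2]

def toIdx (x : Fin (m + r + 1)) : Fin m ⊕ Fin (r + 1) :=
  if h : 1 ≤ x.val ∧ x.val ≤ m then Sum.inl ⟨x.val - 1, by omega⟩
  else Sum.inr ⟨x.val - m, by have := x.isLt; omega⟩

def glued (σ : Setoid (Fin m)) (τ : Setoid (Fin r)) : Setoid (Fin (m + r + 1)) :=
  Setoid.comap toIdx (ssum σ (addMin τ))

variable {σ : Setoid (Fin m)} {τ : Setoid (Fin r)}

lemma glued_rel_gap {x y : Fin (m + r + 1)} (hx : 1 ≤ x.val ∧ x.val ≤ m)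
    (hy : 1 ≤ y.val ∧ y.val ≤ m) :
    (glued σ τ).r x y ↔ σ.r ⟨x.val - 1, by omega⟩ ⟨y.val - 1, by omega⟩ := by
  show (ssum σ (addMin τ)).r (toIdx x) (toIdx y) ↔ _
  rw [toIdx, toIdx, dif_pos hx, dif_pos hy]
  exact Iff.rfl

lemma glued_rel_rest {x y : Fin (m + r + 1)} (hx : ¬(1 ≤ x.val ∧ x.val ≤ m))
    (hy : ¬(1 ≤ y.val ∧ y.val ≤ m)) :
    (glued σ τ).r x y ↔
      (addMin τ).r ⟨x.val - m, by have := x.isLt; omega⟩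
        ⟨y.val - m, by have := y.isLt; omega⟩ := by
  show (ssum σ (addMin τ)).r (toIdx x) (toIdx y) ↔ _
  rw [toIdx, toIdx, dif_neg hx, dif_neg hy]
  exact Iff.rfl

lemma glued_rel_mixed {x y : Fin (m + r + 1)} (hx : 1 ≤ x.val ∧ x.val ≤ m)
    (hy : ¬(1 ≤ y.val ∧ y.val ≤ m)) : ¬ (glued σ τ).r x y := by
  show ¬ (ssum σ (addMin τ)).r (toIdx x) (toIdx y)
  rw [toIdx, toIdx, dif_pos hx, dif_neg hy]
  exact fun h => h

lemma glued_rel_mixed' {x y : Fin (m + r + 1)} (hx : ¬(1 ≤ x.val ∧ x.val ≤ m))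
    (hy : 1 ≤ y.val ∧ y.val ≤ m) : ¬ (glued σ τ).r x y := by
  show ¬ (ssum σ (addMin τ)).r (toIdx x) (toIdx y)
  rw [toIdx, toIdx, dif_neg hx, dif_pos hy]
  exact fun h => h

end Step

end NCP
namespace NCP

open Finset

section Step2

variable {m r : ℕ}

lemma klt {n : ℕ} {a b : Fin n} (h : a.val < b.val) :
    (fun (i : Fin n) => (i.val : ℤ)) a < (fun (i : Fin n) => (i.val : ℤ)) b :=
  Int.ofNat_lt.mpr h

lemma klt' {n : ℕ} {a b : Fin n} (h : (fun (i : Fin n) => (i.val : ℤ)) a <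
    (fun (i : Fin n) => (i.val : ℤ)) b) : a.val < b.val :=
  Int.ofNat_lt.mp h

lemma isNC_comap {p q : ℕ} (e : Fin p → Fin q)
    (he : ∀ i j : Fin p, i.val < j.val → (e i).val < (e j).val)
    {s : Setoid (Fin q)} (hs : IsNC s) : IsNC (Setoid.comap e s) := by
  intro a b c d hab hbc hcd hac hbd
  have h1 : a.val < b.val := klt' hab
  have h2 : b.val < c.val := klt' hbc
  have h3 : c.val < d.val := klt' hcd
  exact hs (e a) (e b) (e c) (e d) (klt (he a b h1))
    (klt (he b c h2)) (klt (he c d h3)) hac hbd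

lemma addMin_isNC {τ : Setoid (Fin r)} (hτ : IsNC τ) : IsNC (addMin τ) := by
  intro a b c d hab hbc hcd hac hbd
  have h1 : a.val < b.val := klt' hab
  have h2 : b.val < c.val := klt' hbc
  have h3 : c.val < d.val := klt' hcd
  intro i j hi hj
  have hr : 0 < r := i.pos
  have hd := d.isLt
  have hτ1 : τ.r i ⟨c.val - 1, by omega⟩ := hac i ⟨c.val - 1, by omega⟩ hi rfl
  have hτ2 : τ.r j ⟨d.val - 1, by omega⟩ := hbd j ⟨d.val - 1, by omega⟩ hj rfl
  rcases Nat.eq_or_lt_of_le (by omega : i.val ≤ j.val) with heq | hlt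
  · have : i = j := Fin.ext heq
    exact this ▸ τ.iseqv.refl i
  · refine hτ i j ⟨c.val - 1, by omega⟩ ⟨d.val - 1, by omega⟩ ?_ ?_ ?_ hτ1 hτ2
    · exact klt hlt
    · exact klt (by omega : j.val < c.val - 1)
    · exact klt (by omega : c.val - 1 < d.val - 1)

variable {σ : Setoid (Fin m)} {τ : Setoid (Fin r)}

lemma isNC_glued (hσ : IsNC σ) (hτ : IsNC τ) : IsNC (glued σ τ) := by
  intro a b c d hab hbc hcd hac hbd
  have h1 : a.val < b.val := klt' hab
  have h2 : b.val < c.val := klt' hbc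
  have h3 : c.val < d.val := klt' hcd
  by_cases hA : 1 ≤ a.val ∧ a.val ≤ m <;> by_cases hC : 1 ≤ c.val ∧ c.val ≤ m
  · -- both gap
    have hB : 1 ≤ b.val ∧ b.val ≤ m := by omega
    by_cases hD : 1 ≤ d.val ∧ d.val ≤ m
    · rw [glued_rel_gap hA hC] at hac
      rw [glued_rel_gap hB hD] at hbd
      rw [glued_rel_gap hA hB]
      refine hσ _ _ _ _ ?_ ?_ ?_ hac hbd
      · exact klt (by omega : a.val - 1 < b.val - 1)
      · exact klt (by omega : b.val - 1 < c.val - 1)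
      · exact klt (by omega : c.val - 1 < d.val - 1)
    · exact absurd hbd (glued_rel_mixed hB hD)
  · exact absurd hac (glued_rel_mixed hA hC)
  · exact absurd hac (glued_rel_mixed' hA hC)
  · -- both not gap
    by_cases hB : 1 ≤ b.val ∧ b.val ≤ m
    · by_cases hD : 1 ≤ d.val ∧ d.val ≤ m
      · omega
      · exact absurd hbd (glued_rel_mixed hB hD)
    · have hD : ¬(1 ≤ d.val ∧ d.val ≤ m) := by omega
      rw [glued_rel_rest hA hC] at hac
      rw [glued_rel_rest hB hD] at hbd
      rw [glued_rel_rest hA hB]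
      refine addMin_isNC hτ _ _ _ _ ?_ ?_ ?_ hac hbd
      · exact klt (by omega : a.val - m < b.val - m)
      · exact klt (by omega : b.val - m < c.val - m)
      · exact klt (by omega : c.val - m < d.val - m)

end Step2

end NCP
namespace NCP

open Finset

section Step3

variable {m r : ℕ}

/-- the zero element of `Fin (m + r + 1)`. -/
def I0 : Fin (m + r + 1) := ⟨0, by omega⟩

variable {π : Setoid (Fin (m + r + 1))}

lemma P1 (hsel : sel π = m) {y : Fin (m + r + 1)} (hy : y.val = m + 1) :
    π.r I0 y :=
  ((sel_eq π (rfl : (I0 : Fin (m+r+1)).val = 0) (by omega : m < m + r + 1)).1 hsel).2 y hy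

lemma P2 (hsel : sel π = m) {y : Fin (m + r + 1)} (hy1 : 0 < y.val) (hy2 : y.val ≤ m) :
    ¬ π.r I0 y :=
  ((sel_eq π (rfl : (I0 : Fin (m+r+1)).val = 0) (by omega : m < m + r + 1)).1 hsel).1 y hy1 hy2

lemma no_mixed (hNC : IsNC π) (hsel : sel π = m) {x y : Fin (m + r + 1)}
    (hx1 : 1 ≤ x.val) (hx2 : x.val ≤ m) (hy : m + 1 ≤ y.val) : ¬ π.r x y := by
  intro hr
  have hyl := y.isLt
  have h01 : π.r I0 ⟨m + 1, by omega⟩ := P1 hsel rfl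
  rcases Nat.eq_or_lt_of_le hy with heq | hlt
  · have hyy : y = ⟨m + 1, by omega⟩ := Fin.ext heq.symm
    exact P2 hsel (by omega) hx2 (π.iseqv.trans (hyy ▸ h01) (π.iseqv.symm hr))
  · exact P2 hsel (by omega) hx2
      (hNC I0 x ⟨m + 1, by omega⟩ y (klt (by simp only [I0, val_mk]; omega))
        (klt (by simp only [val_mk]; omega)) (klt (by simp only [val_mk]; omega)) h01 hr)

variable {σ : Setoid (Fin m)} {τ : Setoid (Fin r)}

lemma sel_glued : sel (glued σ τ) = m := by
  rw [sel_eq (glued σ τ) (rfl : (I0 : Fin (m+r+1)).val = 0) (by omega : m < m + r + 1)]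
  constructor
  · intro y hy1 hy2
    exact glued_rel_mixed' (by simp only [I0, val_mk]; omega) ⟨hy1, hy2⟩
  · intro y hy
    rw [glued_rel_rest (by simp only [I0, val_mk]; omega) (by omega)]
    intro i j hi hj
    have hij : i = j := Fin.ext (by simp only [I0, val_mk] at hi hj; omega)
    exact hij ▸ τ.iseqv.refl i

lemma resg_glued : Setoid.comap gape (glued σ τ) = σ := by
  apply Setoid.ext
  intro i j
  have hi := i.isLt
  have hj := j.isLt
  show (glued σ τ).r (gape i) (gape j) ↔ σ.r i j
  rw [glued_rel_gap (by simp only [gape, val_mk]; omega) (by simp only [gape, val_mk]; omega)]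
  have e1 : (⟨(gape (r := r) i).val - 1, by simp only [gape, val_mk]; omega⟩ : Fin m) = i :=
    Fin.ext (by simp only [gape, val_mk]; omega)
  have e2 : (⟨(gape (r := r) j).val - 1, by simp only [gape, val_mk]; omega⟩ : Fin m) = j :=
    Fin.ext (by simp only [gape, val_mk]; omega)
  rw [e1, e2]

lemma resr_glued : Setoid.comap reste (glued σ τ) = τ := by
  apply Setoid.ext
  intro i j
  have hi := i.isLt
  have hj := j.isLt
  show (glued σ τ).r (reste i) (reste j) ↔ τ.r i j
  rw [glued_rel_rest (by simp only [reste, val_mk]; omega) (by simp only [reste, val_mk]; omega)]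
  exact addMin_rel i j (by simp only [reste, val_mk]; omega) (by simp only [reste, val_mk]; omega)

lemma glued_res (hNC : IsNC π) (hsel : sel π = m) :
    glued (Setoid.comap gape π) (Setoid.comap reste π) = π := by
  apply Setoid.ext
  intro x y
  have hxl := x.isLt
  have hyl := y.isLt
  by_cases hx : 1 ≤ x.val ∧ x.val ≤ m <;> by_cases hy : 1 ≤ y.val ∧ y.val ≤ m
  · rw [glued_rel_gap hx hy]
    show π.r (gape ⟨x.val - 1, by omega⟩) (gape ⟨y.val - 1, by omega⟩) ↔ π.r x y
    have e1 : gape (r := r) ⟨x.val - 1, by omega⟩ = x := Fin.ext (by simp only [gape, val_mk]; omega)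
    have e2 : gape (r := r) ⟨y.val - 1, by omega⟩ = y := Fin.ext (by simp only [gape, val_mk]; omega)
    rw [e1, e2]
  · constructor
    · intro h
      exact absurd h (glued_rel_mixed hx hy)
    · intro h
      exfalso
      rcases (by omega : y.val = 0 ∨ m + 1 ≤ y.val) with h0 | hbig
      · have hyy : y = I0 := Fin.ext (by simp only [I0, val_mk]; omega)
        exact P2 hsel (by omega) hx.2 (hyy ▸ π.iseqv.symm h)
      · exact no_mixed hNC hsel hx.1 hx.2 hbig h
  · constructor
    · intro h
      exact absurd h (glued_rel_mixed' hx hy)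
    · intro h
      exfalso
      rcases (by omega : x.val = 0 ∨ m + 1 ≤ x.val) with h0 | hbig
      · have hxx : x = I0 := Fin.ext (by simp only [I0, val_mk]; omega)
        exact P2 hsel (by omega) hy.2 (hxx ▸ h)
      · exact no_mixed hNC hsel hy.1 hy.2 hbig (π.iseqv.symm h)
  · -- both not gap
    rw [glued_rel_rest hx hy]
    rcases Nat.eq_zero_or_pos r with hr0 | hr
    · -- r = 0 : x and y are both 0
      have hx0 : x.val = 0 := by omega
      have hy0 : y.val = 0 := by omega
      have hxy : x = y := Fin.ext (by omega)
      constructor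
      · intro _
        exact hxy ▸ π.iseqv.refl x
      · intro _ i j _ _
        exact absurd i.isLt (by omega)
    · -- r ≥ 1
      rw [addMin_rel (τ := Setoid.comap reste π) ⟨x.val - m - 1, by omega⟩
        ⟨y.val - m - 1, by omega⟩ (by simp only [val_mk]) (by simp only [val_mk])]
      show π.r (reste ⟨x.val - m - 1, by omega⟩) (reste ⟨y.val - m - 1, by omega⟩) ↔ π.r x y
      have h01 : π.r I0 ⟨m + 1, by omega⟩ := P1 hsel rfl
      rcases (by omega : x.val = 0 ∨ m + 1 ≤ x.val) with hx0 | hxbig <;>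
        rcases (by omega : y.val = 0 ∨ m + 1 ≤ y.val) with hy0 | hybig
      · have e1 : reste (m := m) (⟨x.val - m - 1, by omega⟩ : Fin r) = ⟨m + 1, by omega⟩ :=
          Fin.ext (by simp only [reste, val_mk]; omega)
        have e2 : reste (m := m) (⟨y.val - m - 1, by omega⟩ : Fin r) = ⟨m + 1, by omega⟩ :=
          Fin.ext (by simp only [reste, val_mk]; omega)
        have hxy : x = y := Fin.ext (by omega)
        rw [e1, e2]
        exact ⟨fun _ => hxy ▸ π.iseqv.refl x, fun _ => π.iseqv.refl _⟩
      · have e1 : reste (m := m) (⟨x.val - m - 1, by omega⟩ : Fin r) = ⟨m + 1, by omega⟩ :=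
          Fin.ext (by simp only [reste, val_mk]; omega)
        have e2 : reste (m := m) (⟨y.val - m - 1, by omega⟩ : Fin r) = y :=
          Fin.ext (by simp only [reste, val_mk]; omega)
        have hxx : x = I0 := Fin.ext (by simp only [I0, val_mk]; omega)
        rw [e1, e2, hxx]
        exact ⟨fun h => π.iseqv.trans h01 h, fun h => π.iseqv.trans (π.iseqv.symm h01) h⟩
      · have e1 : reste (m := m) (⟨x.val - m - 1, by omega⟩ : Fin r) = x :=
          Fin.ext (by simp only [reste, val_mk]; omega)
        have e2 : reste (m := m) (⟨y.val - m - 1, by omega⟩ : Fin r) = ⟨m + 1, by omega⟩ :=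
          Fin.ext (by simp only [reste, val_mk]; omega)
        have hyy : y = I0 := Fin.ext (by simp only [I0, val_mk]; omega)
        rw [e1, e2, hyy]
        exact ⟨fun h => π.iseqv.trans h (π.iseqv.symm h01), fun h => π.iseqv.trans h h01⟩
      · have e1 : reste (m := m) (⟨x.val - m - 1, by omega⟩ : Fin r) = x :=
          Fin.ext (by simp only [reste, val_mk]; omega)
        have e2 : reste (m := m) (⟨y.val - m - 1, by omega⟩ : Fin r) = y :=
          Fin.ext (by simp only [reste, val_mk]; omega)
        rw [e1, e2]

end Step3

end NCP
namespace NCP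

open Finset

section Step4

variable {m r : ℕ} {π : Setoid (Fin (m + r + 1))}

lemma gap_block_gap (hNC : IsNC π) (hsel : sel π = m) {x : Fin (m + r + 1)}
    (hx1 : 1 ≤ x.val) (hx2 : x.val ≤ m) :
    ∀ y ∈ blk π x, 1 ≤ y.val ∧ y.val ≤ m := by
  intro y hy
  rw [mem_blk] at hy
  have hyl := y.isLt
  by_contra hcon
  rcases (by omega : y.val = 0 ∨ m + 1 ≤ y.val) with h0 | hbig
  · have hyy : y = I0 := Fin.ext (by simp only [I0, val_mk]; omega)
    exact P2 hsel (by omega) hx2 (hyy ▸ π.iseqv.symm hy)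
  · exact no_mixed hNC hsel hx1 hx2 hbig hy

lemma block0_pi : block0 π = blk π I0 := block0_eq (rfl : (I0 : Fin (m+r+1)).val = 0)

lemma gape_mem_blk {σ : Setoid (Fin m)} : True := trivial

lemma gape_image_blk (hNC : IsNC π) (hsel : sel π = m) (x : Fin m) :
    (blk (Setoid.comap gape π) x).image gape = blk π (gape x) := by
  have hxg : 1 ≤ (gape (r := r) x).val ∧ (gape (r := r) x).val ≤ m := by
    have := x.isLt
    simp only [gape, val_mk]
    omega
  ext y
  simp only [Finset.mem_image, mem_blk]
  constructor
  · rintro ⟨k, hk, rfl⟩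
    exact hk
  · intro hy
    have hygap := gap_block_gap hNC hsel hxg.1 hxg.2 y (mem_blk.mpr hy)
    refine ⟨⟨y.val - 1, by omega⟩, ?_, Fin.ext (by simp only [gape, val_mk]; omega)⟩
    show π.r (gape x) (gape ⟨y.val - 1, by omega⟩)
    have e : gape (r := r) ⟨y.val - 1, by omega⟩ = y :=
      Fin.ext (by simp only [gape, val_mk]; omega)
    rw [e]
    exact hy

lemma rest_block (hNC : IsNC π) (hsel : sel π = m) {B : Finset (Fin (m + r + 1))}
    (hB : B ∈ blocksOf π) (hne : B ≠ block0 π)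
    (hng : ¬ ∀ y ∈ B, 1 ≤ y.val ∧ y.val ≤ m) :
    ∀ y ∈ B, m + 1 ≤ y.val := by
  obtain ⟨x, rfl⟩ := mem_blocksOf.mp hB
  have h0 : ∀ y ∈ blk π x, y.val ≠ 0 := by
    intro y hy hy0
    rw [mem_blk] at hy
    have hyy : y = I0 := Fin.ext (by simp only [I0, val_mk]; omega)
    apply hne
    rw [blk_eq_blk (hyy ▸ hy), ← block0_pi]
  push_neg at hng
  obtain ⟨y0, hy0B, hy0⟩ := hng
  have hy0l := y0.isLt
  have hy0big : m + 1 ≤ y0.val := by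
    have := h0 y0 hy0B
    omega
  intro y hyB
  have hyl := y.isLt
  have hy0' := h0 y hyB
  by_contra hcon
  have hygap : 1 ≤ y.val ∧ y.val ≤ m := by omega
  exact no_mixed hNC hsel hygap.1 hygap.2 hy0big
    (π.iseqv.trans (π.iseqv.symm (mem_blk.mp hyB)) (mem_blk.mp hy0B))

lemma reste_image_blk (hNC : IsNC π) (hsel : sel π = m) (z : Fin r)
    (hz : ¬ π.r (reste z) I0) :
    (blk (Setoid.comap reste π) z).image reste = blk π (reste z) := by
  have hzl := z.isLt
  ext y
  simp only [Finset.mem_image, mem_blk]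
  constructor
  · rintro ⟨k, hk, rfl⟩
    exact hk
  · intro hy
    have hyl := y.isLt
    have hy0 : y.val ≠ 0 := by
      intro h0
      exact hz (π.iseqv.trans hy (show π.r y I0 from
        (Fin.ext (by simp only [I0, val_mk]; omega) : y = I0) ▸ π.iseqv.refl y))
    have hybig : m + 1 ≤ y.val := by
      by_contra hcon
      exact no_mixed hNC hsel (by omega) (by omega)
        (by simp only [reste, val_mk]; omega : m + 1 ≤ (reste (m := m) z).val)
        (π.iseqv.symm hy)
    refine ⟨⟨y.val - m - 1, by omega⟩, ?_, Fin.ext (by simp only [reste, val_mk]; omega)⟩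
    show π.r (reste z) (reste ⟨y.val - m - 1, by omega⟩)
    have e : reste (m := m) ⟨y.val - m - 1, by omega⟩ = y :=
      Fin.ext (by simp only [reste, val_mk]; omega)
    rw [e]
    exact hy

lemma block0_insert (hNC : IsNC π) (hsel : sel π = m) :
    block0 π = insert I0 ((block0 (Setoid.comap reste π)).image reste) := by
  ext y
  rw [mem_block0 (rfl : (I0 : Fin (m+r+1)).val = 0), Finset.mem_insert]
  have hyl := y.isLt
  constructor
  · intro h
    by_cases hy0 : y.val = 0
    · exact Or.inl (Fin.ext (by simp only [I0, val_mk]; omega))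
    · right
      have hybig : m + 1 ≤ y.val := by
        by_contra hcon
        exact P2 hsel (by omega) (by omega) h
      have hr : 0 < r := by omega
      refine Finset.mem_image.mpr ⟨⟨y.val - m - 1, by omega⟩, ?_,
        Fin.ext (by simp only [reste, val_mk]; omega)⟩
      rw [mem_block0 (rfl : (⟨0, hr⟩ : Fin r).val = 0)]
      show π.r (reste ⟨0, hr⟩) (reste ⟨y.val - m - 1, by omega⟩)
      have e1 : reste (m := m) (⟨0, hr⟩ : Fin r) = ⟨m + 1, by omega⟩ :=
        Fin.ext (by simp only [reste, val_mk]; omega)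
      have e2 : reste (m := m) ⟨y.val - m - 1, by omega⟩ = y :=
        Fin.ext (by simp only [reste, val_mk]; omega)
      rw [e1, e2]
      exact π.iseqv.trans (π.iseqv.symm (P1 hsel rfl)) h
  · rintro (rfl | h)
    · exact π.iseqv.refl _
    · obtain ⟨z, hz, rfl⟩ := Finset.mem_image.mp h
      have hr : 0 < r := z.pos
      rw [mem_block0 (rfl : (⟨0, hr⟩ : Fin r).val = 0)] at hz
      have hz' : π.r (reste ⟨0, hr⟩) (reste z) := hz
      have e1 : reste (m := m) (⟨0, hr⟩ : Fin r) = ⟨m + 1, by omega⟩ :=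
        Fin.ext (by simp only [reste, val_mk]; omega)
      rw [e1] at hz'
      exact π.iseqv.trans (P1 hsel rfl) hz'

lemma block0_card (hNC : IsNC π) (hsel : sel π = m) :
    (block0 π).card = 1 + (block0 (Setoid.comap reste π)).card := by
  rw [block0_insert hNC hsel, Finset.card_insert_of_notMem, Finset.card_image_of_injective _
    reste_inj]
  · omega
  · intro hmem
    obtain ⟨z, _, hz⟩ := Finset.mem_image.mp hmem
    have := congrArg Fin.val hz
    simp only [reste, val_mk, I0] at this
    omega

end Step4

end NCP
namespace NCP

open Finset

section Step5

variable {m r : ℕ} {π : Setoid (Fin (m + r + 1))}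

lemma claimA (κ : ℕ → ℂ) (hNC : IsNC π) (hsel : sel π = m) :
    ∏ B ∈ ((blocksOf π).erase (block0 π)).filter
        (fun B => ∀ y ∈ B, 1 ≤ y.val ∧ y.val ≤ m), κ B.card
      = ∏ C ∈ blocksOf (Setoid.comap gape π), κ C.card := by
  refine Finset.prod_nbij' (fun B => univ.filter (fun k : Fin m => gape k ∈ B))
    (fun C => C.image gape) ?_ ?_ ?_ ?_ ?_
  · -- hi
    intro B hB
    obtain ⟨hB1, hBgap⟩ := Finset.mem_filter.mp hB
    obtain ⟨x, rfl⟩ := mem_blocksOf.mp (Finset.mem_of_mem_erase hB1)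
    have hxB : x ∈ blk π x := mem_blk.mpr (π.iseqv.refl x)
    have hxg := hBgap x hxB
    set x' : Fin m := ⟨x.val - 1, by omega⟩ with hx'
    have hgx : gape (r := r) x' = x := Fin.ext (by simp only [gape, val_mk, hx']; omega)
    refine mem_blocksOf.mpr ⟨x', ?_⟩
    ext k
    simp only [mem_blk, Finset.mem_filter, Finset.mem_univ, true_and]
    rw [← hgx]
    exact Iff.rfl
  · -- hj
    intro C hC
    beta_reduce
    obtain ⟨c, rfl⟩ := mem_blocksOf.mp hC
    rw [gape_image_blk hNC hsel c]
    have hcl := c.isLt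
    have hcg : 1 ≤ (gape (r := r) c).val ∧ (gape (r := r) c).val ≤ m := by
      simp only [gape, val_mk]; omega
    refine Finset.mem_filter.mpr ⟨Finset.mem_erase.mpr ⟨?_, mem_blocksOf.mpr ⟨gape c, rfl⟩⟩,
      gap_block_gap hNC hsel hcg.1 hcg.2⟩
    intro heq
    have : I0 ∈ blk π (gape c) := by
      rw [heq, block0_pi]
      exact mem_blk.mpr (π.iseqv.refl I0)
    exact P2 hsel (by omega) hcg.2 (π.iseqv.symm (mem_blk.mp this))
  · -- left_inv
    intro B hB
    obtain ⟨hB1, hBgap⟩ := Finset.mem_filter.mp hB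
    ext y
    simp only [Finset.mem_image, Finset.mem_filter, Finset.mem_univ, true_and]
    constructor
    · rintro ⟨k, hk, rfl⟩
      exact hk
    · intro hy
      have hyg := hBgap y hy
      refine ⟨⟨y.val - 1, by omega⟩, ?_, Fin.ext (by simp only [gape, val_mk]; omega)⟩
      have e : gape (r := r) ⟨y.val - 1, by omega⟩ = y :=
        Fin.ext (by simp only [gape, val_mk]; omega)
      rw [e]
      exact hy
  · -- right_inv
    intro C _
    ext k
    simp only [Finset.mem_filter, Finset.mem_univ, true_and]
    constructor
    · intro hk
      obtain ⟨k', hk', he⟩ := Finset.mem_image.mp hk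
      rwa [← gape_inj he]
    · intro hk
      exact Finset.mem_image_of_mem _ hk
  · -- values
    intro B hB
    beta_reduce
    obtain ⟨hB1, hBgap⟩ := Finset.mem_filter.mp hB
    have himg : (univ.filter (fun k : Fin m => gape k ∈ B)).image gape = B := by
      ext y
      simp only [Finset.mem_image, Finset.mem_filter, Finset.mem_univ, true_and]
      constructor
      · rintro ⟨k, hk, rfl⟩
        exact hk
      · intro hy
        have hyg := hBgap y hy
        refine ⟨⟨y.val - 1, by omega⟩, ?_, Fin.ext (by simp only [gape, val_mk]; omega)⟩
        have e : gape (r := r) ⟨y.val - 1, by omega⟩ = y :=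
          Fin.ext (by simp only [gape, val_mk]; omega)
        rw [e]
        exact hy
    have hcard : (univ.filter (fun k : Fin m => gape k ∈ B)).card = B.card := by
      conv_rhs => rw [← himg]
      rw [Finset.card_image_of_injective _ gape_inj]
    rw [hcard]

lemma claimB (κ : ℕ → ℂ) (hNC : IsNC π) (hsel : sel π = m) :
    ∏ B ∈ ((blocksOf π).erase (block0 π)).filter
        (fun B => ¬ ∀ y ∈ B, 1 ≤ y.val ∧ y.val ≤ m), κ B.card
      = ∏ C ∈ (blocksOf (Setoid.comap reste π)).erase (block0 (Setoid.comap reste π)),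
          κ C.card := by
  have hrest : ∀ B ∈ ((blocksOf π).erase (block0 π)).filter
      (fun B => ¬ ∀ y ∈ B, 1 ≤ y.val ∧ y.val ≤ m), ∀ y ∈ B, m + 1 ≤ y.val := by
    intro B hB
    obtain ⟨hB1, hBng⟩ := Finset.mem_filter.mp hB
    exact rest_block hNC hsel (Finset.mem_of_mem_erase hB1) (Finset.ne_of_mem_erase hB1) hBng
  have himgB : ∀ B ∈ ((blocksOf π).erase (block0 π)).filter
      (fun B => ¬ ∀ y ∈ B, 1 ≤ y.val ∧ y.val ≤ m),
      (univ.filter (fun k : Fin r => reste k ∈ B)).image reste = B := by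
    intro B hB
    ext y
    simp only [Finset.mem_image, Finset.mem_filter, Finset.mem_univ, true_and]
    constructor
    · rintro ⟨k, hk, rfl⟩
      exact hk
    · intro hy
      have hyg := hrest B hB y hy
      have hyl := y.isLt
      refine ⟨⟨y.val - m - 1, by omega⟩, ?_, Fin.ext (by simp only [reste, val_mk]; omega)⟩
      have e : reste (m := m) ⟨y.val - m - 1, by omega⟩ = y :=
        Fin.ext (by simp only [reste, val_mk]; omega)
      rw [e]
      exact hy
  refine Finset.prod_nbij' (fun B => univ.filter (fun k : Fin r => reste k ∈ B))
    (fun C => C.image reste) ?_ ?_ himgB ?_ ?_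
  · -- hi
    intro B hB
    beta_reduce
    obtain ⟨hB1, hBng⟩ := Finset.mem_filter.mp hB
    obtain ⟨x, hxB⟩ := mem_blocksOf.mp (Finset.mem_of_mem_erase hB1)
    have hxm : x ∈ B := hxB ▸ mem_blk.mpr (π.iseqv.refl x)
    have hxbig : m + 1 ≤ x.val := hrest B hB x hxm
    have hxl := x.isLt
    have hr : 0 < r := by omega
    set x' : Fin r := ⟨x.val - m - 1, by omega⟩ with hx'
    have hgx : reste (m := m) x' = x := Fin.ext (by simp only [reste, val_mk, hx']; omega)
    have hblk : univ.filter (fun k : Fin r => reste k ∈ B) = blk (Setoid.comap reste π) x' := by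
      ext k
      simp only [mem_blk, Finset.mem_filter, Finset.mem_univ, true_and, ← hxB]
      rw [← hgx]
      exact Iff.rfl
    rw [hblk]
    refine Finset.mem_erase.mpr ⟨?_, mem_blocksOf.mpr ⟨x', rfl⟩⟩
    intro heq
    have ht0 : (⟨0, hr⟩ : Fin r) ∈ blk (Setoid.comap reste π) x' := by
      rw [heq, block0_eq (rfl : (⟨0, hr⟩ : Fin r).val = 0)]
      exact mem_blk.mpr ((Setoid.comap reste π).iseqv.refl _)
    have hx0 : π.r x (reste ⟨0, hr⟩) := by
      have := mem_blk.mp ht0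
      rw [← hgx]
      exact this
    have e1 : reste (m := m) (⟨0, hr⟩ : Fin r) = ⟨m + 1, by omega⟩ :=
      Fin.ext (by simp only [reste, val_mk]; omega)
    rw [e1] at hx0
    have hI0x : π.r I0 x := π.iseqv.trans (P1 hsel rfl) (π.iseqv.symm hx0)
    apply Finset.ne_of_mem_erase hB1
    rw [← hxB, blk_eq_blk (π.iseqv.symm hI0x), ← block0_pi]
  · -- hj
    intro C hC
    beta_reduce
    obtain ⟨hC1, hC2⟩ := Finset.mem_erase.mp hC
    obtain ⟨z, hzC⟩ := mem_blocksOf.mp hC2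
    have hr : 0 < r := z.pos
    have hznot : ¬ (Setoid.comap reste π).r z ⟨0, hr⟩ := by
      intro hzz
      exact hC1 (by rw [← hzC, blk_eq_blk hzz, ← block0_eq (rfl : (⟨0, hr⟩ : Fin r).val = 0)])
    have hzI0 : ¬ π.r (reste z) I0 := by
      intro hri
      apply hznot
      have e1 : reste (m := m) (⟨0, hr⟩ : Fin r) = ⟨m + 1, by omega⟩ :=
        Fin.ext (by simp only [reste, val_mk]; omega)
      show π.r (reste z) (reste ⟨0, hr⟩)
      rw [e1]
      exact π.iseqv.trans hri (P1 hsel rfl)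
    rw [← hzC, reste_image_blk hNC hsel z hzI0]
    have hzbig : m + 1 ≤ (reste (m := m) z).val := by
      have := z.isLt
      simp only [reste, val_mk]
      omega
    refine Finset.mem_filter.mpr ⟨Finset.mem_erase.mpr ⟨?_, mem_blocksOf.mpr ⟨reste z, rfl⟩⟩, ?_⟩
    · intro heq
      have : I0 ∈ blk π (reste z) := by
        rw [heq, block0_pi]
        exact mem_blk.mpr (π.iseqv.refl I0)
      exact hzI0 (mem_blk.mp this)
    · push_neg
      exact ⟨reste z, mem_blk.mpr (π.iseqv.refl _), fun _ => by omega⟩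
  · -- right_inv
    intro C _
    ext k
    simp only [Finset.mem_filter, Finset.mem_univ, true_and]
    constructor
    · intro hk
      obtain ⟨k', hk', he⟩ := Finset.mem_image.mp hk
      rwa [← reste_inj he]
    · intro hk
      exact Finset.mem_image_of_mem _ hk
  · -- values
    intro B hB
    beta_reduce
    have hcard : (univ.filter (fun k : Fin r => reste k ∈ B)).card = B.card := by
      conv_rhs => rw [← himgB B hB]
      rw [Finset.card_image_of_injective _ reste_inj]
    rw [hcard]

lemma wtf_glued (κ : ℕ → ℂ) (t : ℕ) (hNC : IsNC π) (hsel : sel π = m) :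
    wtf κ t π = fval κ (Setoid.comap gape π) * wtf κ (t + 1) (Setoid.comap reste π) := by
  rw [wtf, wtf, fval, block0_card hNC hsel,
    ← Finset.prod_filter_mul_prod_filter_not ((blocksOf π).erase (block0 π))
      (fun B => ∀ y ∈ B, 1 ≤ y.val ∧ y.val ≤ m) (fun B => κ B.card),
    claimA κ hNC hsel, claimB κ hNC hsel,
    show t + (1 + (block0 (Setoid.comap reste π)).card) =
      t + 1 + (block0 (Setoid.comap reste π)).card by omega]
  ring

end Step5

end NCP
namespace NCP

open Finset PowerSeries

lemma step (κ : ℕ → ℂ) (t m r : ℕ) :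
    ∑ π ∈ (Finset.univ : Finset {s : Setoid (Fin (m + r + 1)) // IsNC s}).filter
        (fun π => sel π.1 = m), wtf κ t π.1
      = Ssum κ m * Gsum κ (t + 1) r := by
  rw [Ssum, Gsum, Finset.sum_mul_sum, ← Finset.sum_product']
  have hgape : ∀ i j : Fin m, i.val < j.val → ((gape (r := r) i)).val < (gape (r := r) j).val := by
    intro i j h
    simp only [gape, val_mk]
    omega
  have hreste : ∀ i j : Fin r, i.val < j.val → ((reste (m := m) i)).val < (reste (m := m) j).val := by
    intro i j h
    simp only [reste, val_mk]
    omega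
  refine Finset.sum_nbij'
    (fun π => (⟨Setoid.comap gape π.1, isNC_comap gape hgape π.2⟩,
      ⟨Setoid.comap reste π.1, isNC_comap reste hreste π.2⟩))
    (fun p => ⟨glued p.1.1 p.2.1, isNC_glued p.1.2 p.2.2⟩) ?_ ?_ ?_ ?_ ?_
  · intro a _
    exact Finset.mem_product.mpr ⟨Finset.mem_univ _, Finset.mem_univ _⟩
  · intro p _
    exact Finset.mem_filter.mpr ⟨Finset.mem_univ _, sel_glued⟩
  · intro π hπ
    have hsel := (Finset.mem_filter.mp hπ).2
    exact Subtype.ext (glued_res π.2 hsel)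
  · intro p _
    exact Prod.ext (Subtype.ext resg_glued) (Subtype.ext resr_glued)
  · intro π hπ
    have hsel := (Finset.mem_filter.mp hπ).2
    exact wtf_glued κ t π.2 hsel

lemma Gsum_succ (κ : ℕ → ℂ) (t N : ℕ) (hN : 0 < N) :
    Gsum κ t N = ∑ m ∈ range N, Ssum κ m * Gsum κ (t + 1) (N - 1 - m) := by
  have h1 : ∀ π : {s : Setoid (Fin N) // IsNC s},
      wtf κ t π.1 = ∑ m ∈ range N, if sel π.1 = m then wtf κ t π.1 else 0 := by
    intro π
    rw [Finset.sum_ite_eq (range N) (sel π.1), if_pos (mem_range.mpr (sel_lt π.1 hN))]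
  rw [Gsum]
  calc ∑ π : {s : Setoid (Fin N) // IsNC s}, wtf κ t π.1
      = ∑ π : {s : Setoid (Fin N) // IsNC s}, ∑ m ∈ range N,
          if sel π.1 = m then wtf κ t π.1 else 0 := Finset.sum_congr rfl fun π _ => h1 π
    _ = ∑ m ∈ range N, ∑ π : {s : Setoid (Fin N) // IsNC s},
          if sel π.1 = m then wtf κ t π.1 else 0 := Finset.sum_comm
    _ = ∑ m ∈ range N, Ssum κ m * Gsum κ (t + 1) (N - 1 - m) := by
        refine Finset.sum_congr rfl fun m hm => ?_
        rw [mem_range] at hm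
        obtain ⟨r, rfl⟩ : ∃ r, N = m + r + 1 := ⟨N - m - 1, by omega⟩
        rw [← Finset.sum_filter, show m + r + 1 - 1 - m = r by omega]
        exact step κ t m r

def Mser (κ : ℕ → ℂ) : PowerSeries ℂ := PowerSeries.mk (Ssum κ)

lemma coeff_Mpow_succ (κ : ℕ → ℂ) (k n : ℕ) :
    (coeff n) ((Mser κ) ^ (k + 1)) =
      ∑ i ∈ range (n + 1), Ssum κ i * (coeff (n - i)) ((Mser κ) ^ k) := by
  rw [pow_succ', PowerSeries.coeff_mul, Finset.Nat.sum_antidiagonal_eq_sum_range_succ_mk]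
  exact Finset.sum_congr rfl fun i _ => by rw [Mser, coeff_mk]

lemma tri (N : ℕ) (f : ℕ → ℕ → ℂ) :
    ∑ m ∈ range N, ∑ k ∈ range (N - m), f m k
      = ∑ k ∈ range N, ∑ m ∈ range (N - k), f m k := by
  rw [Finset.sum_sigma', Finset.sum_sigma']
  refine Finset.sum_nbij' (fun p => ⟨p.2, p.1⟩) (fun p => ⟨p.2, p.1⟩) ?_ ?_ ?_ ?_ ?_ <;>
    try (intro p hp; simp only [Finset.mem_sigma, mem_range] at hp ⊢; omega)
  · intro p hp
    rfl
  · intro p hp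
    rfl
  · intro p hp
    rfl

lemma Gclosed (κ : ℕ → ℂ) (N : ℕ) : ∀ t, Gsum κ t N =
    ∑ k ∈ range (N + 1), κ (t + k) * (coeff (N - k)) ((Mser κ) ^ k) := by
  induction N using Nat.strong_induction_on with
  | _ N IH =>
    intro t
    rcases Nat.eq_zero_or_pos N with rfl | hN
    · simp [Gsum_zero]
    · rw [Gsum_succ κ t N hN]
      have hfinal : ∑ k ∈ range (N + 1), κ (t + k) * (coeff (N - k)) ((Mser κ) ^ k)
          = ∑ k ∈ range N, κ (t + 1 + k) * (coeff (N - 1 - k)) ((Mser κ) ^ (k + 1)) := by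
        rw [Finset.sum_range_succ']
        have h0 : κ (t + 0) * (coeff (N - 0)) ((Mser κ) ^ 0) = 0 := by
          rw [pow_zero, Nat.sub_zero, PowerSeries.coeff_one, if_neg (by omega), mul_zero]
        rw [h0, add_zero]
        exact Finset.sum_congr rfl fun k _ => by
          rw [show t + (k + 1) = t + 1 + k by omega, show N - (k + 1) = N - 1 - k by omega]
      rw [hfinal]
      calc ∑ m ∈ range N, Ssum κ m * Gsum κ (t + 1) (N - 1 - m)
          = ∑ m ∈ range N, ∑ k ∈ range (N - m),
              Ssum κ m * (κ (t + 1 + k) * (coeff (N - 1 - m - k)) ((Mser κ) ^ k)) := by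
            refine Finset.sum_congr rfl fun m hm => ?_
            rw [mem_range] at hm
            rw [IH (N - 1 - m) (by omega) (t + 1), show N - 1 - m + 1 = N - m by omega,
              Finset.mul_sum]
        _ = ∑ k ∈ range N, ∑ m ∈ range (N - k),
              Ssum κ m * (κ (t + 1 + k) * (coeff (N - 1 - m - k)) ((Mser κ) ^ k)) :=
            tri N _
        _ = ∑ k ∈ range N, κ (t + 1 + k) * (coeff (N - 1 - k)) ((Mser κ) ^ (k + 1)) := by
            refine Finset.sum_congr rfl fun k hk => ?_
            rw [mem_range] at hk
            rw [coeff_Mpow_succ κ k (N - 1 - k), show N - 1 - k + 1 = N - k by omega,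
              Finset.mul_sum]
            refine Finset.sum_congr rfl fun i hi => ?_
            rw [mem_range] at hi
            rw [show N - 1 - k - i = N - 1 - i - k by omega]
            ring

lemma K0 (κ : ℕ → ℂ) :
    pscomp (phiSeries κ) (PowerSeries.X * Mser κ) = phiSeries (Ssum κ) := by
  ext n
  rw [PSC.coeff_pscomp]
  rcases Nat.eq_zero_or_pos n with rfl | hn
  · simp [phiSeries]
  · have hR : (coeff n) (phiSeries (Ssum κ)) = Ssum κ n := by
      rw [phiSeries, coeff_mk, if_neg (by omega)]
    rw [hR]
    have hterm : ∀ k ∈ range (n + 1),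
        (coeff k) (phiSeries κ) * (coeff n) ((PowerSeries.X * Mser κ) ^ k)
          = κ (0 + k) * (coeff (n - k)) ((Mser κ) ^ k) := by
      intro k hk
      rw [mem_range] at hk
      rw [mul_pow, phiSeries, coeff_mk]
      rcases Nat.eq_zero_or_pos k with rfl | hkpos
      · rw [if_pos rfl, zero_mul, pow_zero, PowerSeries.coeff_one, if_neg (by omega), mul_zero]
      · rw [if_neg (by omega), zero_add]
        congr 1
        conv_lhs => rw [show n = (n - k) + k by omega]
        rw [PowerSeries.coeff_X_pow_mul]
    rw [Finset.sum_congr rfl hterm, ← Gclosed κ n 0, Gsum_eq_Ssum κ n hn]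

end NCP

/-- If `a ∈ A` with `φ(a) = 1`, then the `S`-transform
`S_a(z) = ((1+z)/z)·𝒳_a(z)` equals `(1/z)·c_a^{⟨−1⟩}(z)`; equivalently (multiplying
through by `z`), `(1 + z)·𝒳_a(z) = c_a^{⟨−1⟩}(z)`.  Here `𝒳_a` is the compositional
inverse of `ψ_a(z) = Σ_{n≥1} φ(aⁿ) zⁿ`, and the free cumulants `κ_n(a)` are defined by
the moment–cumulant relation over non-crossing partitions, with cumulant series
`c_a(z) = Σ_{n≥1} κ_n(a) zⁿ` and compositional inverse `cInv`. -/
theorem s_transform_eq_inv_cumulant_series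
    (A : Type*) [Ring A] [Algebra ℂ A] (φ : A →ₗ[ℂ] ℂ) (hφ1 : φ 1 = 1) (a : A)
    (ha : φ a = 1)
    (κ : ℕ → ℂ)
    (hMC : ∀ n : ℕ, φ (a ^ n) = ∑ π : {s : Setoid (Fin n) // IsNC s}, fval κ π.1)
    (ψ 𝒳 cInv : PowerSeries ℂ)
    (hψ : ψ = PowerSeries.mk fun n => if n = 0 then 0 else φ (a ^ n))
    (h𝒳 : pscomp ψ 𝒳 = PowerSeries.X ∧ pscomp 𝒳 ψ = PowerSeries.X)
    (hcInv : pscomp (phiSeries κ) cInv = PowerSeries.X ∧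
      pscomp cInv (phiSeries κ) = PowerSeries.X) :
    (1 + PowerSeries.X) * 𝒳 = cInv := by
  obtain ⟨h𝒳1, h𝒳2⟩ := h𝒳
  obtain ⟨hc1, hc2⟩ := hcInv
  have hψc : PowerSeries.constantCoeff ψ = 0 := by
    rw [hψ, ← PowerSeries.coeff_zero_eq_constantCoeff, PowerSeries.coeff_mk]
    simp
  have h𝒳c : PowerSeries.constantCoeff 𝒳 = 0 := by
    rw [← PSC.constantCoeff_pscomp 𝒳 ψ, h𝒳2]
    exact PowerSeries.constantCoeff_X
  have hcInvc : PowerSeries.constantCoeff cInv = 0 := by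
    rw [← PSC.constantCoeff_pscomp cInv (phiSeries κ), hc2]
    exact PowerSeries.constantCoeff_X
  have hphic : PowerSeries.constantCoeff (phiSeries κ) = 0 := by
    rw [phiSeries, ← PowerSeries.coeff_zero_eq_constantCoeff, PowerSeries.coeff_mk]
    simp
  have hS : ∀ n, NCP.Ssum κ n = φ (a ^ n) := fun n => by
    rw [NCP.Ssum]; exact (hMC n).symm
  have hψeq : ψ = phiSeries (NCP.Ssum κ) := by
    rw [hψ, phiSeries]
    congr 1
    funext n
    by_cases hn : n = 0 <;> simp [hn, hS]
  have hMeq : NCP.Mser κ = 1 + ψ := by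
    ext n
    rw [NCP.Mser, PowerSeries.coeff_mk, map_add]
    rcases Nat.eq_zero_or_pos n with rfl | hn
    · rw [hS 0, pow_zero, hφ1]
      rw [← PowerSeries.coeff_zero_eq_constantCoeff_apply] at hψc
      rw [hψc, PowerSeries.coeff_one, if_pos rfl, add_zero]
    · rw [hψ, PowerSeries.coeff_mk, PowerSeries.coeff_one, if_neg (by omega),
        if_neg (by omega), zero_add, hS]
  have K : pscomp (phiSeries κ) (PowerSeries.X * (1 + ψ)) = ψ := by
    rw [← hMeq, NCP.K0 κ, ← hψeq]
  have hXMc : PowerSeries.constantCoeff (PowerSeries.X * (1 + ψ)) = 0 := by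
    rw [map_mul, PowerSeries.constantCoeff_X, zero_mul]
  have hu : pscomp (PowerSeries.X * (1 + ψ)) 𝒳 = (1 + PowerSeries.X) * 𝒳 := by
    rw [PSC.pscomp_mul_left h𝒳c, PSC.pscomp_X_left h𝒳c, PSC.pscomp_add_left,
      PSC.pscomp_one_left, h𝒳1]
    ring
  have huc : PowerSeries.constantCoeff ((1 + PowerSeries.X) * 𝒳) = 0 := by
    rw [map_mul, h𝒳c, mul_zero]
  have hKu : pscomp (phiSeries κ) ((1 + PowerSeries.X) * 𝒳) = PowerSeries.X := by
    rw [← hu, ← PSC.pscomp_assoc hXMc h𝒳c, K, h𝒳1]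
  have final : cInv = (1 + PowerSeries.X) * 𝒳 :=
    calc cInv = pscomp cInv PowerSeries.X := (PSC.pscomp_X_right cInv).symm
      _ = pscomp cInv (pscomp (phiSeries κ) ((1 + PowerSeries.X) * 𝒳)) := by rw [hKu]
      _ = pscomp (pscomp cInv (phiSeries κ)) ((1 + PowerSeries.X) * 𝒳) :=
          (PSC.pscomp_assoc hphic huc cInv).symm
      _ = pscomp PowerSeries.X ((1 + PowerSeries.X) * 𝒳) := by rw [hc2]
      _ = (1 + PowerSeries.X) * 𝒳 := PSC.pscomp_X_left huc
  exact final.symm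

end
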